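/- arXiv:2107.08082 — 5 statements merged into one kernel-verified Lean document; each statement's English description precedes it below -/
import Mathlib

section
/- Let P be a locally finite poset that is not an antichain (i.e. there exist x < y in P), R a nonzero commutative unital ring and n ≥ 3. Then I^n(P,R) is not third-power associative: there exists f ∈ I^n(P,R) with f·(f·f) ≠ (f·f)·f. Concretely, f = e_{(x,…,x)} + e_{(x,…,x,y)} + e_{(x,…,x,y,y)} (with n, n−1 and n−2 copies of x respectively) satisfies f·(f·f) ≠ (f·f)·f. -/
/-- Partial `n`-flags: chains `x_1 ≤ … ≤ x_n` in the poset `P`. -/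
abbrev FlagN (P : Type*) [PartialOrder P] (n : ℕ) : Type _ := {x : Fin n → P // Monotone x}

/-- `ell x y` is the length of the interval `[x,y]`, i.e. the maximal cardinality of a
chain in `[x,y]` minus one. -/
noncomputable def ell {P : Type*} [PartialOrder P] (x y : P) : ℕ∞ :=
  (Set.Icc x y).chainHeight (· < ·) - 1

section Mono

variable {P : Type*} [PartialOrder P]

lemma sandwich_mono {m : ℕ} {x : Fin (m + 1) → P} (hx : Monotone x) {y : Fin m → P}
    (hy : ∀ i, x i.castSucc ≤ y i ∧ y i ≤ x i.succ) : Monotone y := by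
  intro i j hij
  rcases eq_or_lt_of_le hij with rfl | h
  · exact le_rfl
  · have h1 : (i.succ : Fin (m + 1)) ≤ j.castSucc := by
      rw [Fin.le_def, Fin.val_succ, Fin.coe_castSucc]
      exact h
    exact ((hy i).2.trans (hx h1)).trans (hy j).1

lemma cons_mono' {m : ℕ} {a : P} {w : Fin (m + 1) → P} (hw : Monotone w) (ha : a ≤ w 0) :
    Monotone (Fin.cons a w) := by
  intro s t hst
  rcases Fin.eq_zero_or_eq_succ s with rfl | ⟨i, rfl⟩
  · rcases Fin.eq_zero_or_eq_succ t with rfl | ⟨j, rfl⟩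
    · exact le_rfl
    · simp only [Fin.cons_zero, Fin.cons_succ]
      exact ha.trans (hw (Fin.zero_le _))
  · rcases Fin.eq_zero_or_eq_succ t with rfl | ⟨j, rfl⟩
    · exact absurd (Fin.le_zero_iff.mp hst) (Fin.succ_ne_zero i)
    · simp only [Fin.cons_succ]
      exact hw (Fin.succ_le_succ_iff.mp hst)

lemma snoc_mono' {m : ℕ} {w : Fin (m + 1) → P} (hw : Monotone w) {b : P}
    (hb : w (Fin.last m) ≤ b) : Monotone (Fin.snoc w b) := by
  intro s t hst
  rcases Fin.eq_castSucc_or_eq_last s with ⟨i, rfl⟩ | rfl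
  · rcases Fin.eq_castSucc_or_eq_last t with ⟨j, rfl⟩ | rfl
    · simp only [Fin.snoc_castSucc]
      exact hw (Fin.castSucc_le_castSucc_iff.mp hst)
    · simp only [Fin.snoc_castSucc, Fin.snoc_last]
      exact (hw (Fin.le_last i)).trans hb
  · rcases Fin.eq_castSucc_or_eq_last t with ⟨j, rfl⟩ | rfl
    · exact absurd hst (not_le.mpr (Fin.castSucc_lt_last j))
    · exact le_rfl

lemma cons_sandwich_mono {m : ℕ} {x : Fin (m + 1) → P} (hx : Monotone x) {y : Fin m → P}
    (hy : ∀ i, x i.castSucc ≤ y i ∧ y i ≤ x i.succ) {a : P} (ha : a ≤ x 0) :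
    Monotone (Fin.cons a y) := by
  intro s t hst
  rcases Fin.eq_zero_or_eq_succ s with rfl | ⟨i, rfl⟩
  · rcases Fin.eq_zero_or_eq_succ t with rfl | ⟨j, rfl⟩
    · exact le_rfl
    · simp only [Fin.cons_zero, Fin.cons_succ]
      exact ha.trans ((hx (Fin.zero_le _)).trans (hy j).1)
  · rcases Fin.eq_zero_or_eq_succ t with rfl | ⟨j, rfl⟩
    · exact absurd (Fin.le_zero_iff.mp hst) (Fin.succ_ne_zero i)
    · simp only [Fin.cons_succ]
      exact sandwich_mono hx hy (Fin.succ_le_succ_iff.mp hst)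

lemma snoc_sandwich_mono {m : ℕ} {x : Fin (m + 1) → P} (hx : Monotone x) {y : Fin m → P}
    (hy : ∀ i, x i.castSucc ≤ y i ∧ y i ≤ x i.succ) {b : P} (hb : x (Fin.last m) ≤ b) :
    Monotone (Fin.snoc y b) := by
  intro s t hst
  rcases Fin.eq_castSucc_or_eq_last s with ⟨i, rfl⟩ | rfl
  · rcases Fin.eq_castSucc_or_eq_last t with ⟨j, rfl⟩ | rfl
    · simp only [Fin.snoc_castSucc]
      exact sandwich_mono hx hy (Fin.castSucc_le_castSucc_iff.mp hst)
    · simp only [Fin.snoc_castSucc, Fin.snoc_last]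
      exact (hy i).2.trans ((hx (Fin.le_last _)).trans hb)
  · rcases Fin.eq_castSucc_or_eq_last t with ⟨j, rfl⟩ | rfl
    · exact absurd hst (not_le.mpr (Fin.castSucc_lt_last j))
    · exact le_rfl

lemma cons_snoc_sandwich_mono {m : ℕ} {x : Fin (m + 1) → P} (hx : Monotone x) {z : Fin m → P}
    (hz : ∀ i, x i.castSucc ≤ z i ∧ z i ≤ x i.succ) {a b : P} (ha : a ≤ x 0)
    (hb : x (Fin.last m) ≤ b) : Monotone (Fin.cons a (Fin.snoc z b)) := by
  refine cons_mono' (snoc_sandwich_mono hx hz hb) ?_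
  cases m with
  | zero =>
      rw [show (0 : Fin 1) = Fin.last 0 from rfl, Fin.snoc_last]
      exact ha.trans hb
  | succ m' =>
      rw [show (0 : Fin (m' + 2)) = (0 : Fin (m' + 1)).castSucc from rfl, Fin.snoc_castSucc]
      exact ha.trans ((hx (Fin.zero_le _)).trans (hz 0).1)

end Mono

section PreDefs

variable (P R : Type*) [PartialOrder P] [LocallyFiniteOrder P] [CommRing R]

/-- The multiplication of the partial flag incidence algebra `I^n(P,R)`, `n = m+1`. -/
def mulN {m : ℕ} (f g : FlagN P (m + 1) → R) : FlagN P (m + 1) → R := fun x =>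
  ∑ y ∈ (Fintype.piFinset fun i : Fin m =>
      Finset.Icc (x.1 i.castSucc) (x.1 i.succ)).attach,
    f ⟨Fin.cons (x.1 0) y.1, cons_sandwich_mono x.2
        (fun i => by
          have := Fintype.mem_piFinset.mp y.2 i
          rwa [Finset.mem_Icc] at this) le_rfl⟩ *
    g ⟨Fin.snoc y.1 (x.1 (Fin.last m)), snoc_sandwich_mono x.2
        (fun i => by
          have := Fintype.mem_piFinset.mp y.2 i
          rwa [Finset.mem_Icc] at this) le_rfl⟩

variable {P}

/-- The standard basis element `e_t` of `I^n(P,R)`. -/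
def eN [DecidableEq P] {n : ℕ} (t0 : FlagN P n) : FlagN P n → R := fun t => if t = t0 then 1 else 0

variable (P)

/-- The ideal `J^n_k(P,R)` of functions vanishing on flags `(x_1,…,x_n)` with `l(x_1,x_n) < k`. -/
def JN (m k : ℕ) : Submodule R (FlagN P (m + 1) → R) where
  carrier := {f | ∀ t : FlagN P (m + 1), ell (t.1 0) (t.1 (Fin.last m)) < (k : ℕ∞) → f t = 0}
  add_mem' := by
    intro f g hf hg t ht
    simp only [Pi.add_apply, hf t ht, hg t ht, add_zero]
  zero_mem' := by intro t _; rfl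
  smul_mem' := by
    intro c f hf t ht
    simp only [Pi.smul_apply, hf t ht, smul_zero]

end PreDefs

section StepAux

variable {P : Type*} [PartialOrder P]

/-- The step flag `(x^c, y, y, …)`. -/
def stp (x y : P) (n c : ℕ) : Fin n → P := fun i => if (i : ℕ) < c then x else y

lemma stp_app_lt {x y : P} {n c : ℕ} {i : Fin n} (h : (i : ℕ) < c) : stp x y n c i = x :=
  if_pos h

lemma stp_app_ge {x y : P} {n c : ℕ} {i : Fin n} (h : c ≤ (i : ℕ)) : stp x y n c i = y :=
  if_neg (by omega)

lemma stp_mono {x y : P} (h : x ≤ y) (n c : ℕ) : Monotone (stp x y n c) := by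
  intro i j hij
  have hij' : (i : ℕ) ≤ j := hij
  unfold stp
  split_ifs with h1 h2 h2
  · exact le_rfl
  · exact h
  · exact absurd h2 (by omega)
  · exact le_rfl

lemma stp_const (x y : P) {n c : ℕ} (h : n ≤ c) : (fun _ : Fin n => x) = stp x y n c := by
  funext i
  exact (stp_app_lt (lt_of_lt_of_le i.isLt h)).symm

lemma stp_snoc (x y : P) {n c : ℕ} (hc : c ≤ n) :
    (Fin.snoc (stp x y n c) y : Fin (n + 1) → P) = stp x y (n + 1) c := by
  funext i
  rcases Fin.eq_castSucc_or_eq_last i with ⟨j, rfl⟩ | rfl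
  · rw [Fin.snoc_castSucc]
    simp only [stp, Fin.coe_castSucc]
  · rw [Fin.snoc_last]
    exact (stp_app_ge (by rw [Fin.val_last]; omega)).symm

lemma stp_cons (x y : P) (n c : ℕ) :
    (Fin.cons x (stp x y n c) : Fin (n + 1) → P) = stp x y (n + 1) (c + 1) := by
  funext i
  rcases Fin.eq_zero_or_eq_succ i with rfl | ⟨j, rfl⟩
  · rw [Fin.cons_zero]
    exact (stp_app_lt (by simp)).symm
  · rw [Fin.cons_succ]
    simp only [stp, Fin.val_succ, Nat.add_lt_add_iff_right]

lemma stp_ne {x y : P} (hxy : x ≠ y) {n c c' : ℕ} (h1 : c < c') (h2 : c < n) :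
    stp x y n c ≠ stp x y n c' := by
  intro h
  have := congrFun h ⟨c, h2⟩
  rw [stp_app_ge (by simp), stp_app_lt (by simpa using h1)] at this
  exact hxy this.symm

lemma cons_ne_stp_x {x y : P} {n c : ℕ} {v : Fin n → P} (j : Fin n)
    (h : v j ≠ x) (hj : (j : ℕ) + 1 < c) : Fin.cons x v ≠ stp x y (n + 1) c := by
  intro he
  have := congrFun he j.succ
  rw [Fin.cons_succ, stp_app_lt (by rw [Fin.val_succ]; omega)] at this
  exact h this

lemma cons_ne_stp_y {x y : P} {n c : ℕ} {v : Fin n → P} (j : Fin n)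
    (h : v j ≠ y) (hj : c ≤ (j : ℕ) + 1) : Fin.cons x v ≠ stp x y (n + 1) c := by
  intro he
  have := congrFun he j.succ
  rw [Fin.cons_succ, stp_app_ge (by rw [Fin.val_succ]; omega)] at this
  exact h this

lemma snoc_ne_stp_x {x y : P} {n c : ℕ} {v : Fin n → P} {z : P} (j : Fin n)
    (h : v j ≠ x) (hj : (j : ℕ) < c) : (Fin.snoc v z : Fin (n + 1) → P) ≠ stp x y (n + 1) c := by
  intro he
  have := congrFun he j.castSucc
  rw [Fin.snoc_castSucc, stp_app_lt (by rw [Fin.coe_castSucc]; omega)] at this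
  exact h this

lemma cons_eq_stp {x y : P} {n c : ℕ} {v : Fin n → P}
    (h : Fin.cons x v = stp x y (n + 1) (c + 1)) : v = stp x y n c := by
  rw [← stp_cons] at h
  have := congrArg Fin.tail h
  rwa [Fin.tail_cons, Fin.tail_cons] at this

lemma snoc_eq_stp {x y : P} {n c : ℕ} {v : Fin n → P} (hc : c ≤ n)
    (h : Fin.snoc v y = stp x y (n + 1) c) : v = stp x y n c := by
  rw [← stp_snoc x y hc] at h
  have := congrArg Fin.init h
  rwa [Fin.init_snoc, Fin.init_snoc] at this

/-- The "indicator of the three step flags" function. -/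
def Fstp {P : Type*} [PartialOrder P] [DecidableEq P] (R : Type*) [CommRing R]
    (x y : P) (k : ℕ) (w : Fin (k + 3) → P) : R :=
  (if w = stp x y (k + 3) (k + 3) then 1 else 0) +
  (if w = stp x y (k + 3) (k + 2) then 1 else 0) +
  (if w = stp x y (k + 3) (k + 1) then 1 else 0)

section Fstp
variable {P : Type*} [PartialOrder P] [DecidableEq P] (R : Type*) [CommRing R]
variable {x y : P} (k : ℕ)

lemma Fstp_A (hxy : x ≠ y) : Fstp R x y k (stp x y (k + 3) (k + 3)) = 1 := by
  have h1 : stp x y (k + 3) (k + 3) ≠ stp x y (k + 3) (k + 2) :=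
    (stp_ne hxy (by omega) (by omega)).symm
  have h2 : stp x y (k + 3) (k + 3) ≠ stp x y (k + 3) (k + 1) :=
    (stp_ne hxy (by omega) (by omega)).symm
  simp [Fstp, h1, h2]

lemma Fstp_B (hxy : x ≠ y) : Fstp R x y k (stp x y (k + 3) (k + 2)) = 1 := by
  have h1 : stp x y (k + 3) (k + 2) ≠ stp x y (k + 3) (k + 3) :=
    stp_ne hxy (by omega) (by omega)
  have h2 : stp x y (k + 3) (k + 2) ≠ stp x y (k + 3) (k + 1) :=
    (stp_ne hxy (by omega) (by omega)).symm
  simp [Fstp, h1, h2]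

lemma Fstp_C (hxy : x ≠ y) : Fstp R x y k (stp x y (k + 3) (k + 1)) = 1 := by
  have h1 : stp x y (k + 3) (k + 1) ≠ stp x y (k + 3) (k + 3) :=
    stp_ne hxy (by omega) (by omega)
  have h2 : stp x y (k + 3) (k + 1) ≠ stp x y (k + 3) (k + 2) :=
    stp_ne hxy (by omega) (by omega)
  simp [Fstp, h1, h2]

lemma Fstp_eq_zero {w : Fin (k + 3) → P} (h1 : w ≠ stp x y (k + 3) (k + 3))
    (h2 : w ≠ stp x y (k + 3) (k + 2)) (h3 : w ≠ stp x y (k + 3) (k + 1)) :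
    Fstp R x y k w = 0 := by
  simp [Fstp, h1, h2, h3]

end Fstp

end StepAux

/-- If `P` is not an antichain and `R ≠ 0`, then `I^n(P,R)` (`n = k+3 ≥ 3`)
is not third-power associative; concretely `f = e_{x^n} + e_{(x^{n-1},y)} + e_{(x^{n-2},y,y)}`
satisfies `f(ff) ≠ (ff)f`. -/
theorem not_third_power_associative
    {P R : Type*} [PartialOrder P] [LocallyFiniteOrder P] [DecidableEq P]
    [CommRing R] [Nontrivial R]
    (k : ℕ) (x y : P) (hxy : x < y) (f : FlagN P (k + 3) → R)
    (hf : f =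
      eN R (⟨fun _ => x, monotone_const⟩ : FlagN P (k + 3)) +
      eN R (⟨Fin.snoc (fun _ : Fin (k + 2) => x) y,
        snoc_mono' monotone_const hxy.le⟩ : FlagN P (k + 3)) +
      eN R (⟨Fin.snoc (Fin.snoc (fun _ : Fin (k + 1) => x) y) y,
        snoc_mono' (snoc_mono' monotone_const hxy.le)
          (by rw [Fin.snoc_last])⟩ : FlagN P (k + 3))) :
    mulN P R f (mulN P R f f) ≠ mulN P R (mulN P R f f) f := by

  classical
  have hxy' : x ≠ y := hxy.ne
  have hAval : (fun _ : Fin (k + 3) => x) = stp x y (k + 3) (k + 3) := stp_const x y le_rfl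
  have hBval : (Fin.snoc (fun _ : Fin (k + 2) => x) y : Fin (k + 3) → P)
      = stp x y (k + 3) (k + 2) := by
    rw [stp_const x y (le_refl (k + 2)), stp_snoc x y (le_refl (k + 2))]
  have hCval : (Fin.snoc (Fin.snoc (fun _ : Fin (k + 1) => x) y) y : Fin (k + 3) → P)
      = stp x y (k + 3) (k + 1) := by
    rw [stp_const x y (le_refl (k + 1)), stp_snoc x y (le_refl (k + 1)),
      stp_snoc x y (show k + 1 ≤ k + 2 by omega)]
  have hF : ∀ (w : Fin (k + 3) → P) (hw : Monotone w), f ⟨w, hw⟩ = Fstp R x y k w := by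
    intro w hw
    rw [hf]
    simp only [Pi.add_apply, eN, Subtype.mk.injEq, hAval, hBval, hCval, Fstp]
  have hmemc : ∀ (c : ℕ) (v : Fin (k + 2) → P),
      (∀ i : Fin (k + 2), v i ∈ Finset.Icc (stp x y (k + 3) c i.castSucc)
        (stp x y (k + 3) c i.succ)) →
      (∀ i : Fin (k + 2), (i : ℕ) + 1 < c → v i = x) ∧
      (∀ i : Fin (k + 2), c ≤ (i : ℕ) → v i = y) := by
    intro c v hv
    constructor
    · intro i hi
      have h := hv i
      rw [Finset.mem_Icc, stp_app_lt (by rw [Fin.coe_castSucc]; omega),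
        stp_app_lt (by rw [Fin.val_succ]; omega)] at h
      exact le_antisymm h.2 h.1
    · intro i hi
      have h := hv i
      rw [Finset.mem_Icc, stp_app_ge (by rw [Fin.coe_castSucc]; omega),
        stp_app_ge (by rw [Fin.val_succ]; omega)] at h
      exact le_antisymm h.2 h.1
  have hmemgen : ∀ c c' : ℕ, c' ≤ c → c ≤ c' + 1 →
      stp x y (k + 2) c' ∈ Fintype.piFinset (fun i : Fin (k + 2) =>
        Finset.Icc (stp x y (k + 3) c i.castSucc) (stp x y (k + 3) c i.succ)) := by
    intro c c' h1 h2
    rw [Fintype.mem_piFinset]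
    intro i
    rw [Finset.mem_Icc]
    constructor
    · by_cases ha : (i : ℕ) < c'
      · rw [stp_app_lt ha, stp_app_lt (show ((i.castSucc : Fin (k + 3)) : ℕ) < c by
          rw [Fin.coe_castSucc]; omega)]
      · rw [stp_app_ge (le_of_not_gt ha)]
        by_cases hb : ((i.castSucc : Fin (k + 3)) : ℕ) < c
        · rw [stp_app_lt hb]; exact hxy.le
        · rw [stp_app_ge (le_of_not_gt hb)]
    · by_cases hc : (i : ℕ) + 1 < c
      · rw [stp_app_lt (show (i : ℕ) < c' by omega),
          stp_app_lt (show ((i.succ : Fin (k + 3)) : ℕ) < c by rw [Fin.val_succ]; omega)]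
      · rw [stp_app_ge (show c ≤ ((i.succ : Fin (k + 3)) : ℕ) by rw [Fin.val_succ]; omega)]
        by_cases ha : (i : ℕ) < c'
        · rw [stp_app_lt ha]; exact hxy.le
        · rw [stp_app_ge (le_of_not_gt ha)]
  -- evaluation of `ff` at the flag with `k` x's: it is `0`
  have key0 : ∀ hm : Monotone (stp x y (k + 3) k),
      mulN P R f f ⟨stp x y (k + 3) k, hm⟩ = 0 := by
    intro hm
    simp only [mulN, hF]
    refine Finset.sum_eq_zero fun v _ => ?_
    have hcon := hmemc k v.1 (Fintype.mem_piFinset.mp v.2)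
    have hky : v.1 ⟨k, by omega⟩ = y := hcon.2 _ (by show k ≤ k; omega)
    rw [show stp x y (k + 3) k (Fin.last (k + 2)) = y from
      stp_app_ge (by rw [Fin.val_last]; omega)]
    rw [Fstp_eq_zero R k
      (snoc_ne_stp_x ⟨k, by omega⟩ (by rw [hky]; exact Ne.symm hxy') (by show k < k + 3; omega))
      (snoc_ne_stp_x ⟨k, by omega⟩ (by rw [hky]; exact Ne.symm hxy') (by show k < k + 2; omega))
      (snoc_ne_stp_x ⟨k, by omega⟩ (by rw [hky]; exact Ne.symm hxy') (by show k < k + 1; omega)),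
      mul_zero]
  -- evaluation of `ff` at the flag `c` (with `k+1` x's): it is `1`
  have key1 : ∀ hm : Monotone (stp x y (k + 3) (k + 1)),
      mulN P R f f ⟨stp x y (k + 3) (k + 1), hm⟩ = 1 := by
    intro hm
    simp only [mulN, hF]
    simp only [show stp x y (k + 3) (k + 1) 0 = x from stp_app_lt (by rw [Fin.val_zero]; omega),
      show stp x y (k + 3) (k + 1) (Fin.last (k + 2)) = y from
        stp_app_ge (by rw [Fin.val_last]; omega)]
    refine Eq.trans (Finset.sum_eq_single_of_mem
      (⟨stp x y (k + 2) (k + 1), hmemgen (k + 1) (k + 1) le_rfl (by omega)⟩)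
      (Finset.mem_attach _ _) fun b _ hb => ?_) ?_
    · have hb' : b.1 ≠ stp x y (k + 2) (k + 1) := fun h => hb (Subtype.ext h)
      have hcon := hmemc (k + 1) b.1 (Fintype.mem_piFinset.mp b.2)
      have hky : b.1 ⟨k + 1, by omega⟩ = y := hcon.2 _ (by show k + 1 ≤ k + 1; omega)
      rw [Fstp_eq_zero R k
        (snoc_ne_stp_x ⟨k + 1, by omega⟩ (by rw [hky]; exact Ne.symm hxy')
          (by show k + 1 < k + 3; omega))
        (snoc_ne_stp_x ⟨k + 1, by omega⟩ (by rw [hky]; exact Ne.symm hxy')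
          (by show k + 1 < k + 2; omega))
        (fun h => hb' (snoc_eq_stp (by omega) h)), mul_zero]
    · rw [stp_cons, stp_snoc x y (show k + 1 ≤ k + 2 by omega),
        Fstp_B R k hxy', Fstp_C R k hxy', mul_one]
  -- evaluation of `ff` at the flag `b` (with `k+2` x's): it is `2`
  have key2 : ∀ hm : Monotone (stp x y (k + 3) (k + 2)),
      mulN P R f f ⟨stp x y (k + 3) (k + 2), hm⟩ = 2 := by
    intro hm
    simp only [mulN, hF]
    rw [show stp x y (k + 3) (k + 2) 0 = x from stp_app_lt (by rw [Fin.val_zero]; omega),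
      show stp x y (k + 3) (k + 2) (Fin.last (k + 2)) = y from
        stp_app_ge (by rw [Fin.val_last])]
    have hne : (⟨stp x y (k + 2) (k + 2), hmemgen (k + 2) (k + 2) le_rfl (by omega)⟩ :
        {v // v ∈ Fintype.piFinset fun i : Fin (k + 2) =>
          Finset.Icc (stp x y (k + 3) (k + 2) i.castSucc) (stp x y (k + 3) (k + 2) i.succ)}) ≠
        ⟨stp x y (k + 2) (k + 1), hmemgen (k + 2) (k + 1) (by omega) (by omega)⟩ := by
      intro h
      exact stp_ne hxy' (by omega) (by omega) (congrArg Subtype.val h).symm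
    refine Eq.trans (Finset.sum_subset
      (s₁ := {⟨stp x y (k + 2) (k + 2), hmemgen (k + 2) (k + 2) le_rfl (by omega)⟩,
        ⟨stp x y (k + 2) (k + 1), hmemgen (k + 2) (k + 1) (by omega) (by omega)⟩})
      (fun z _ => Finset.mem_attach _ z) fun v _ hv => ?_).symm ?_
    · simp only [Finset.mem_insert, Finset.mem_singleton] at hv
      push_neg at hv
      have hv0 : v.1 ≠ stp x y (k + 2) (k + 2) := fun h => hv.1 (Subtype.ext h)
      have hv1 : v.1 ≠ stp x y (k + 2) (k + 1) := fun h => hv.2 (Subtype.ext h)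
      have hcon := hmemc (k + 2) v.1 (Fintype.mem_piFinset.mp v.2)
      have hzx : v.1 ⟨k + 1, by omega⟩ ≠ x := by
        intro h
        apply hv0
        funext i
        by_cases hik : (i : ℕ) < k + 1
        · rw [hcon.1 i (by omega), stp_app_lt i.isLt]
        · have hi : i = ⟨k + 1, by omega⟩ := Fin.ext (show (i:ℕ) = k + 1 by have := i.isLt; omega)
          rw [hi, h, stp_app_lt (by show k + 1 < k + 2; omega)]
      have hzy : v.1 ⟨k + 1, by omega⟩ ≠ y := by
        intro h
        apply hv1
        funext i
        by_cases hik : (i : ℕ) < k + 1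
        · rw [hcon.1 i (by omega), stp_app_lt hik]
        · have hi : i = ⟨k + 1, by omega⟩ := Fin.ext (show (i:ℕ) = k + 1 by have := i.isLt; omega)
          rw [hi, h, stp_app_ge (by show k + 1 ≤ k + 1; omega)]
      rw [Fstp_eq_zero R k
        (cons_ne_stp_x ⟨k + 1, by omega⟩ hzx (by show k + 1 + 1 < k + 3; omega))
        (cons_ne_stp_y ⟨k + 1, by omega⟩ hzy (by show k + 2 ≤ k + 1 + 1; omega))
        (cons_ne_stp_y ⟨k + 1, by omega⟩ hzy (by show k + 1 ≤ k + 1 + 1; omega)), zero_mul]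
    · rw [Finset.sum_pair hne, stp_cons, stp_cons, stp_snoc x y (le_refl (k + 2)),
        stp_snoc x y (show k + 1 ≤ k + 2 by omega), Fstp_A R k hxy', Fstp_B R k hxy',
        Fstp_C R k hxy']
      norm_num
  set g := mulN P R f f with hg
  -- the two triple products at the flag `c`
  have hL : mulN P R f g ⟨stp x y (k + 3) (k + 1), stp_mono hxy.le _ _⟩ = 1 := by
    simp only [mulN, hF]
    simp only [show stp x y (k + 3) (k + 1) 0 = x from stp_app_lt (by rw [Fin.val_zero]; omega),
      show stp x y (k + 3) (k + 1) (Fin.last (k + 2)) = y from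
        stp_app_ge (by rw [Fin.val_last]; omega)]
    refine Eq.trans (Finset.sum_eq_single_of_mem
      (⟨stp x y (k + 2) (k + 1), hmemgen (k + 1) (k + 1) le_rfl (by omega)⟩)
      (Finset.mem_attach _ _) fun b _ hb => ?_) ?_
    · have hb' : b.1 ≠ stp x y (k + 2) (k + 1) := fun h => hb (Subtype.ext h)
      have hcon := hmemc (k + 1) b.1 (Fintype.mem_piFinset.mp b.2)
      have hky : b.1 ⟨k + 1, by omega⟩ = y := hcon.2 _ (by show k + 1 ≤ k + 1; omega)
      by_cases hc1 : Fin.cons x b.1 = stp x y (k + 3) (k + 1)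
      · have hv : b.1 = stp x y (k + 2) k := cons_eq_stp hc1
        simp only [hv, stp_snoc x y (show k ≤ k + 2 by omega)]
        rw [key0, mul_zero]
      · rw [Fstp_eq_zero R k
          (cons_ne_stp_x ⟨k + 1, by omega⟩ (by rw [hky]; exact Ne.symm hxy')
            (by show k + 1 + 1 < k + 3; omega))
          (fun h => hb' (cons_eq_stp h))
          hc1, zero_mul]
    · simp only [stp_cons, stp_snoc x y (show k + 1 ≤ k + 2 by omega)]
      rw [key1, Fstp_B R k hxy', mul_one]
  have hR : mulN P R g f ⟨stp x y (k + 3) (k + 1), stp_mono hxy.le _ _⟩ = 2 := by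
    simp only [mulN, hF]
    simp only [show stp x y (k + 3) (k + 1) 0 = x from stp_app_lt (by rw [Fin.val_zero]; omega),
      show stp x y (k + 3) (k + 1) (Fin.last (k + 2)) = y from
        stp_app_ge (by rw [Fin.val_last]; omega)]
    refine Eq.trans (Finset.sum_eq_single_of_mem
      (⟨stp x y (k + 2) (k + 1), hmemgen (k + 1) (k + 1) le_rfl (by omega)⟩)
      (Finset.mem_attach _ _) fun b _ hb => ?_) ?_
    · have hb' : b.1 ≠ stp x y (k + 2) (k + 1) := fun h => hb (Subtype.ext h)
      have hcon := hmemc (k + 1) b.1 (Fintype.mem_piFinset.mp b.2)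
      have hky : b.1 ⟨k + 1, by omega⟩ = y := hcon.2 _ (by show k + 1 ≤ k + 1; omega)
      rw [Fstp_eq_zero R k
        (snoc_ne_stp_x ⟨k + 1, by omega⟩ (by rw [hky]; exact Ne.symm hxy')
          (by show k + 1 < k + 3; omega))
        (snoc_ne_stp_x ⟨k + 1, by omega⟩ (by rw [hky]; exact Ne.symm hxy')
          (by show k + 1 < k + 2; omega))
        (fun h => hb' (snoc_eq_stp (by omega) h)), mul_zero]
    · simp only [stp_cons, stp_snoc x y (show k + 1 ≤ k + 2 by omega)]
      rw [key2, Fstp_C R k hxy']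
      norm_num
  intro heq
  have h1 := congrFun heq ⟨stp x y (k + 3) (k + 1), stp_mono hxy.le _ _⟩
  rw [hL, hR] at h1
  have : (1 : R) = 0 := by linear_combination -h1
  exact one_ne_zero this
end

section
/- Let P be a locally finite poset, R a commutative unital ring, n ≥ 2 and k ≥ 0. Then the R-submodule J^n_k(P,R) = {f ∈ I^n(P,R) : f(x_1,…,x_n) = 0 whenever l(x_1,x_n) < k} is a two-sided ideal of I^n(P,R), i.e. for every f ∈ J^n_k(P,R) and g ∈ I^n(P,R) both fg and gf lie in J^n_k(P,R). -/
lemma ell_mono {P : Type*} [PartialOrder P] {a b x0 x1 : P} (h1 : x0 ≤ a) (h2 : b ≤ x1) :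
    ell a b ≤ ell x0 x1 :=
  tsub_le_tsub_right (Set.chainHeight_mono (r := (· < ·)) _ _ (Set.Icc_subset_Icc h1 h2)) 1

/-- For `n = m+1 ≥ 2` and `k ≥ 0`, the submodule `J^n_k(P,R)` is a
two-sided ideal of `I^n(P,R)`. -/
theorem JN_is_ideal
    {P R : Type*} [PartialOrder P] [LocallyFiniteOrder P] [CommRing R]
    (m : ℕ) (hm : 1 ≤ m) (k : ℕ)
    (f g : FlagN P (m + 1) → R) (hf : f ∈ JN P R m k) :
    mulN P R f g ∈ JN P R m k ∧ mulN P R g f ∈ JN P R m k := by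
  obtain ⟨m', rfl⟩ : ∃ m', m = m' + 1 := ⟨m - 1, (Nat.succ_pred_eq_of_pos hm).symm⟩
  constructor
  · intro t ht
    show (∑ y ∈ _, _ * _) = 0
    refine Finset.sum_eq_zero fun y _ => ?_
    have hy : ∀ i, t.1 i.castSucc ≤ y.1 i ∧ y.1 i ≤ t.1 i.succ := fun i => by
      have := Fintype.mem_piFinset.mp y.2 i; rwa [Finset.mem_Icc] at this
    have hzero : f ⟨Fin.cons (t.1 0) y.1, cons_sandwich_mono t.2 hy le_rfl⟩ = 0 := by
      apply hf
      refine lt_of_le_of_lt (ell_mono ?_ ?_) ht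
      · show _ ≤ (Fin.cons (t.1 0) y.1 : Fin (m' + 2) → P) 0
        rw [Fin.cons_zero]
      · show (Fin.cons (t.1 0) y.1 : Fin (m' + 2) → P) (Fin.last (m' + 1)) ≤ _
        rw [show Fin.last (m' + 1) = (Fin.last m').succ from (Fin.succ_last m').symm,
          Fin.cons_succ]
        exact (hy (Fin.last m')).2.trans (le_of_eq (by rw [Fin.succ_last]))
    rw [hzero, zero_mul]
  · intro t ht
    show (∑ y ∈ _, _ * _) = 0
    refine Finset.sum_eq_zero fun y _ => ?_
    have hy : ∀ i, t.1 i.castSucc ≤ y.1 i ∧ y.1 i ≤ t.1 i.succ := fun i => by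
      have := Fintype.mem_piFinset.mp y.2 i; rwa [Finset.mem_Icc] at this
    have hzero : f ⟨Fin.snoc y.1 (t.1 (Fin.last (m' + 1))),
        snoc_sandwich_mono t.2 hy le_rfl⟩ = 0 := by
      apply hf
      refine lt_of_le_of_lt (ell_mono ?_ ?_) ht
      · show _ ≤ (Fin.snoc y.1 (t.1 (Fin.last (m' + 1))) : Fin (m' + 2) → P) 0
        rw [show (0 : Fin (m' + 2)) = (0 : Fin (m' + 1)).castSucc from rfl, Fin.snoc_castSucc]
        exact (hy 0).1
      · show (Fin.snoc y.1 (t.1 (Fin.last (m' + 1))) : Fin (m' + 2) → P) (Fin.last (m' + 1)) ≤ _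
        rw [Fin.snoc_last]
    rw [hzero, mul_zero]
end

section
/- Let P be a finite poset, R a commutative unital ring and n ≥ 2. The quotient algebra I^n(P,R)/J^n_1(P,R) is isomorphic as an R-algebra to the direct product ∏_{x ∈ P} R of |P| copies of R (with coordinatewise operations). -/
section Proof

variable {P R : Type*} [PartialOrder P] [Fintype P] [DecidableEq P] [LocallyFiniteOrder P]
  [CommRing R]

omit [Fintype P] [DecidableEq P] [LocallyFiniteOrder P] in
lemma ell_self (x : P) : ell x x = 0 := by
  have h1 : Set.Icc x x = {x} := Set.Icc_self x
  have h2 : ({x} : Set P).chainHeight (· < ·) = 1 := by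
    rw [← Set.encard_eq_chainHeight_of_isChain _ (Set.subsingleton_singleton).isChain,
      Set.encard_singleton]
  simp [ell, h1, h2]

omit [Fintype P] [DecidableEq P] [LocallyFiniteOrder P] in
lemma one_le_ell {x y : P} (hxy : x < y) : (1 : ℕ∞) ≤ ell x y := by
  have h2 : (2 : ℕ∞) ≤ (Set.Icc x y).chainHeight (· < ·) := by
    have hc : IsChain (· < ·) ({x, y} : Set P) := by
      intro a ha b hb hab
      simp only [Set.mem_insert_iff, Set.mem_singleton_iff] at ha hb
      rcases ha with rfl | rfl <;> rcases hb with rfl | rfl <;> simp_all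
    have hsub : ({x, y} : Set P) ⊆ Set.Icc x y := by
      intro z hz
      simp only [Set.mem_insert_iff, Set.mem_singleton_iff] at hz
      rcases hz with rfl | rfl <;> simp [hxy.le]
    have := Set.encard_le_chainHeight_of_isChain _ _ hsub hc
    rwa [Set.encard_pair hxy.ne] at this
  have h21 : (2 : ℕ∞) - 1 = 1 := by
    rw [show ((2 : ℕ∞)) = ((2 : ℕ) : ℕ∞) by rfl, show ((1 : ℕ∞)) = ((1 : ℕ) : ℕ∞) by rfl,
      ← ENat.coe_sub]
  exact h21 ▸ tsub_le_tsub_right h2 1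

/-- The constant flag at `p`. -/
def constFlag (m : ℕ) (p : P) : FlagN P (m + 1) := ⟨fun _ => p, monotone_const⟩

omit [Fintype P] [DecidableEq P] [LocallyFiniteOrder P] in
lemma flag_const_of_ends {m : ℕ} (t : FlagN P (m + 1))
    (h : t.1 0 = t.1 (Fin.last m)) : t = constFlag m (t.1 0) := by
  apply Subtype.ext
  funext i
  exact le_antisymm (h ▸ t.2 (Fin.le_last i)) (t.2 (Fin.zero_le i))

/-- Evaluation at constant flags, as a linear map. -/
def evalConst (m : ℕ) : (FlagN P (m + 1) → R) →ₗ[R] (P → R) where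
  toFun f := fun p => f (constFlag m p)
  map_add' _ _ := rfl
  map_smul' _ _ := rfl

lemma JN_eq_ker (m : ℕ) : JN P R m 1 = LinearMap.ker (evalConst (R := R) m) := by
  ext f
  constructor
  · intro hf
    ext p
    exact hf (constFlag m p) (by simp [constFlag, ell_self])
  · intro hf t ht
    have hends : t.1 0 = t.1 (Fin.last m) := by
      by_contra h
      have hlt : t.1 0 < t.1 (Fin.last m) := lt_of_le_of_ne (t.2 (Fin.zero_le _)) h
      exact absurd ht (not_lt.mpr (one_le_ell hlt))
    rw [flag_const_of_ends t hends]
    exact congrFun hf (t.1 0)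

omit [Fintype P] [DecidableEq P] [LocallyFiniteOrder P] in
lemma evalConst_surjective (m : ℕ) :
    Function.Surjective (evalConst (P := P) (R := R) m) := by
  intro g
  exact ⟨fun t => g (t.1 0), rfl⟩

lemma mulN_constFlag (m : ℕ) (f g : FlagN P (m + 1) → R) (p : P) :
    mulN P R f g (constFlag m p) = f (constFlag m p) * g (constFlag m p) := by
  rw [mulN]
  have hs : (Fintype.piFinset fun i : Fin m =>
      Finset.Icc ((constFlag m p : FlagN P (m + 1)).1 i.castSucc)
        ((constFlag m p : FlagN P (m + 1)).1 i.succ)) = {fun _ => p} := by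
    ext y
    simp [constFlag, Fintype.mem_piFinset, funext_iff]
  trans (∑ _y ∈ (Fintype.piFinset fun i : Fin m =>
      Finset.Icc ((constFlag m p : FlagN P (m + 1)).1 i.castSucc)
        ((constFlag m p : FlagN P (m + 1)).1 i.succ)).attach,
      f (constFlag m p) * g (constFlag m p))
  · apply Finset.sum_congr rfl
    intro y _
    have hy : y.1 = fun _ => p := by
      funext i
      have h := Fintype.mem_piFinset.mp y.2 i
      rw [Finset.mem_Icc] at h
      exact le_antisymm h.2 h.1
    congr 1
    · congr 1
      apply Subtype.ext
      funext i
      rcases Fin.eq_zero_or_eq_succ i with rfl | ⟨j, rfl⟩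
      · rfl
      · simp [hy, constFlag]
    · congr 1
      apply Subtype.ext
      funext i
      rcases Fin.eq_castSucc_or_eq_last i with ⟨j, rfl⟩ | rfl
      · simp [hy, constFlag]
      · simp [constFlag]
  · rw [Finset.sum_const, Finset.card_attach, hs]
    simp

end Proof

/-- For a finite poset `P` and `n = m+1 ≥ 2`, the quotient algebra
`I^n(P,R)/J^n_1(P,R)` is isomorphic, as an `R`-algebra, to the direct product
`∏_{x ∈ P} R` with coordinatewise operations. -/
theorem quotient_by_JN_one_iso_pi
    {P R : Type*} [PartialOrder P] [Fintype P] [DecidableEq P] [LocallyFiniteOrder P]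
    [CommRing R] (m : ℕ) (hm : 1 ≤ m) :
    ∃ Φ : ((FlagN P (m + 1) → R) ⧸ JN P R m 1) ≃ₗ[R] (P → R),
      ∀ f g : FlagN P (m + 1) → R,
        Φ (Submodule.Quotient.mk (mulN P R f g)) =
          Φ (Submodule.Quotient.mk f) * Φ (Submodule.Quotient.mk g) := by
  have hker : JN P R m 1 = LinearMap.ker (evalConst (P := P) (R := R) m) := JN_eq_ker m
  set L : ((FlagN P (m + 1) → R) ⧸ JN P R m 1) →ₗ[R] (P → R) :=
    Submodule.liftQ _ (evalConst m) hker.le with hL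
  have hinj : Function.Injective L := by
    rw [← LinearMap.ker_eq_bot, hL]
    exact Submodule.ker_liftQ_eq_bot _ _ _ hker.ge
  have hsurj : Function.Surjective L := by
    intro g
    obtain ⟨f, hf⟩ := evalConst_surjective (P := P) (R := R) m g
    exact ⟨Submodule.Quotient.mk f, by simpa [hL] using hf⟩
  refine ⟨LinearEquiv.ofBijective L ⟨hinj, hsurj⟩, fun f g => ?_⟩
  show L _ = L _ * L _
  simp only [hL, Submodule.liftQ_apply]
  ext p
  exact mulN_constFlag m f g p
end

section
/- Let P be a finite poset and R a commutative unital ring. Then the ideal J^3_1(P,R) coincides with the commutator submodule [I^3(P,R), I^3(P,R)], the R-span of all commutators [f,g] = fg − gf with f, g ∈ I^3(P,R). -/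
/-- 3-flags (chains x ≤ y ≤ z) in a poset `P`. -/
abbrev Flag3 (P : Type*) [PartialOrder P] : Type _ :=
  {t : P × P × P // t.1 ≤ t.2.1 ∧ t.2.1 ≤ t.2.2}

section PreDefs

variable (P R : Type*) [PartialOrder P] [LocallyFiniteOrder P] [CommRing R]

/-- The multiplication of the partial flag incidence algebra `I^3(P,R)`. -/
def mul3 : (Flag3 P → R) → (Flag3 P → R) → (Flag3 P → R) := fun f g t =>
  ∑ p ∈ ((Finset.Icc t.1.1 t.1.2.1) ×ˢ (Finset.Icc t.1.2.1 t.1.2.2)).attach,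
    f ⟨(t.1.1, p.1.1, p.1.2), by
        obtain ⟨h1, h2⟩ := Finset.mem_product.mp p.2
        rw [Finset.mem_Icc] at h1 h2
        exact ⟨h1.1, h1.2.trans h2.1⟩⟩ *
    g ⟨(p.1.1, p.1.2, t.1.2.2), by
        obtain ⟨h1, h2⟩ := Finset.mem_product.mp p.2
        rw [Finset.mem_Icc] at h1 h2
        exact ⟨h1.2.trans h2.1, h2.2⟩⟩

variable {P}

/-- The standard basis element `e_t` of `I^3(P,R)`. -/
def e3 [DecidableEq P] (t0 : Flag3 P) : Flag3 P → R := fun t => if t = t0 then 1 else 0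

variable (P)

/-- The ideal `J^3_k(P,R)` of functions vanishing on flags `(x,y,z)` with `l(x,z) < k`. -/
def J3 (k : ℕ) : Submodule R (Flag3 P → R) where
  carrier := {f | ∀ t : Flag3 P, ell t.1.1 t.1.2.2 < (k : ℕ∞) → f t = 0}
  add_mem' := by
    intro f g hf hg t ht
    simp only [Pi.add_apply, hf t ht, hg t ht, add_zero]
  zero_mem' := by intro t _; rfl
  smul_mem' := by
    intro c f hf t ht
    simp only [Pi.smul_apply, hf t ht, smul_zero]

/-- The commutator submodule `[U,V]`. -/
def commSub (U V : Submodule R (Flag3 P → R)) : Submodule R (Flag3 P → R) :=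
  Submodule.span R {h | ∃ f ∈ U, ∃ g ∈ V, h = mul3 P R f g - mul3 P R g f}

end PreDefs

section AuxProofs

lemma ell_lt_one_iff {P : Type*} [PartialOrder P] (x z : P) (hxz : x ≤ z) :
    ell x z < 1 ↔ x = z := by
  constructor
  · intro h
    by_contra hne
    have hlt : x < z := lt_of_le_of_ne hxz hne
    have h2 : (2 : ℕ∞) ≤ (Set.Icc x z).chainHeight (· < ·) := by
      have hc : IsChain (· < ·) ({x, z} : Set P) := by
        intro a ha b hb hab
        simp only [Set.mem_insert_iff, Set.mem_singleton_iff] at ha hb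
        rcases ha with rfl | rfl <;> rcases hb with rfl | rfl <;> simp_all
      have hsub : ({x, z} : Set P) ⊆ Set.Icc x z := by
        intro i hi
        simp only [Set.mem_insert_iff, Set.mem_singleton_iff] at hi
        rcases hi with rfl | rfl
        · exact Set.mem_Icc.mpr ⟨le_refl _, hxz⟩
        · exact Set.mem_Icc.mpr ⟨hxz, le_refl _⟩
      rw [← Set.encard_pair hne]
      exact Set.encard_le_chainHeight_of_isChain _ _ hsub hc
    have h1 : (1 : ℕ∞) ≤ ell x z := by
      unfold ell
      calc (1:ℕ∞) = 2 - 1 := by decide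
      _ ≤ (Set.Icc x z).chainHeight (· < ·) - 1 := tsub_le_tsub_right h2 1
    exact absurd h (not_lt.mpr h1)
  · rintro rfl
    unfold ell
    have hle : (Set.Icc x x).chainHeight (· < ·) ≤ 1 := by
      rw [Set.Icc_self]
      exact (Set.chainHeight_le_encard (s := {x}) (r := (· < ·))).trans (Set.encard_singleton x).le
    rw [tsub_eq_zero_of_le hle]
    exact zero_lt_one

variable {P R : Type*} [PartialOrder P] [LocallyFiniteOrder P] [CommRing R] [DecidableEq P]

lemma e3_apply (a t : Flag3 P) : e3 R a t = if t.1 = a.1 then 1 else 0 := by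
  unfold e3
  by_cases h : t = a
  · simp [h]
  · rw [if_neg h, if_neg (fun hv => h (Subtype.ext hv))]

lemma mul3_e3_apply (a b t : Flag3 P) :
    mul3 P R (e3 R a) (e3 R b) t =
      ∑ p ∈ (Finset.Icc t.1.1 t.1.2.1) ×ˢ (Finset.Icc t.1.2.1 t.1.2.2),
        (if (t.1.1, p.1, p.2) = a.1 then (1:R) else 0) *
        (if (p.1, p.2, t.1.2.2) = b.1 then (1:R) else 0) := by
  unfold mul3
  simp only [e3_apply]
  exact Finset.sum_attach _ fun p : P × P =>
    (if (t.1.1, p.1, p.2) = a.1 then (1:R) else 0) *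
    (if (p.1, p.2, t.1.2.2) = b.1 then (1:R) else 0)

lemma mul3_e3_incomp (a b : Flag3 P) (h : (a.1.2.1, a.1.2.2) ≠ (b.1.1, b.1.2.1)) :
    mul3 P R (e3 R a) (e3 R b) = 0 := by
  funext t
  rw [mul3_e3_apply]
  refine Finset.sum_eq_zero fun p _ => ?_
  by_cases h1 : ((t.1.1, p.1, p.2) : P × P × P) = a.1
  · by_cases h2 : ((p.1, p.2, t.1.2.2) : P × P × P) = b.1
    · exfalso
      apply h
      have e1 : p.1 = a.1.2.1 := by rw [← h1]
      have e2 : p.2 = a.1.2.2 := by rw [← h1]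
      have e3 : p.1 = b.1.1 := by rw [← h2]
      have e4 : p.2 = b.1.2.1 := by rw [← h2]
      rw [← e1, ← e2, ← e3, ← e4]
    · rw [if_neg h2, mul_zero]
  · rw [if_neg h1, zero_mul]

lemma mul3_e3_comp (x u z : P) (hxu : x ≤ u) (huz : u ≤ z) :
    mul3 P R (e3 R ⟨(x, u, u), hxu, le_refl u⟩) (e3 R ⟨(u, u, z), le_refl u, huz⟩) =
      e3 R ⟨(x, u, z), hxu, huz⟩ := by
  funext t
  obtain ⟨⟨x', y', z'⟩, hx'y', hy'z'⟩ := t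
  rw [mul3_e3_apply, e3_apply]
  have hterm : ∀ p ∈ (Finset.Icc x' y') ×ˢ (Finset.Icc y' z'),
      (if ((x', p.1, p.2) : P × P × P) = (x, u, u) then (1:R) else 0) *
      (if ((p.1, p.2, z') : P × P × P) = (u, u, z) then (1:R) else 0) =
      (if p = (u, u) then (if ((x', y', z') : P × P × P) = (x, u, z) then (1:R) else 0)
        else 0) := by
    rintro ⟨p1, p2⟩ hp
    rw [Finset.mem_product, Finset.mem_Icc, Finset.mem_Icc] at hp
    simp only [Prod.mk.injEq]
    by_cases hpu : p1 = u ∧ p2 = u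
    · obtain ⟨h1, h2⟩ := hpu
      have hy : y' = u := by subst h1 h2; exact le_antisymm hp.2.1 hp.1.2
      split_ifs <;> simp_all
    · have h1 : ¬(x' = x ∧ p1 = u ∧ p2 = u) := fun hc => hpu ⟨hc.2.1, hc.2.2⟩
      rw [if_neg h1, zero_mul, if_neg hpu]
  rw [Finset.sum_congr rfl hterm, Finset.sum_ite_eq']
  by_cases hmem : ((u, u) : P × P) ∈ (Finset.Icc x' y') ×ˢ (Finset.Icc y' z')
  · rw [if_pos hmem]
  · rw [if_neg hmem]
    rw [Finset.mem_product, Finset.mem_Icc, Finset.mem_Icc] at hmem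
    by_cases h1 : ((x', y', z') : P × P × P) = (x, u, z)
    · exfalso
      simp only [Prod.mk.injEq] at h1
      apply hmem
      refine ⟨⟨?_, ?_⟩, ?_, ?_⟩ <;> simp_all
    · rw [if_neg h1]
/-- Diagonal evaluation of a product. -/
lemma mul3_diag (f g : Flag3 P → R) (x : P) (h : (x:P) ≤ x ∧ x ≤ x) :
    mul3 P R f g ⟨(x, x, x), h⟩ = f ⟨(x, x, x), h⟩ * g ⟨(x, x, x), h⟩ := by
  unfold mul3
  have hmem : ((x, x) : P × P) ∈ (Finset.Icc x x) ×ˢ (Finset.Icc x x) :=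
    Finset.mem_product.mpr ⟨Finset.mem_Icc.mpr ⟨le_refl x, le_refl x⟩,
      Finset.mem_Icc.mpr ⟨le_refl x, le_refl x⟩⟩
  rw [Finset.sum_eq_single_of_mem (⟨(x, x), hmem⟩ :
      {p // p ∈ (Finset.Icc x x) ×ˢ (Finset.Icc x x)}) (Finset.mem_attach _ _)]
  intro b _ hb
  exfalso
  apply hb
  have hb2 := b.2
  rw [Finset.mem_product, Finset.mem_Icc, Finset.mem_Icc] at hb2
  have h1 : b.1.1 = x := le_antisymm hb2.1.2 hb2.1.1
  have h2 : b.1.2 = x := le_antisymm hb2.2.2 hb2.2.1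
  exact Subtype.ext (Prod.ext h1 h2)

end AuxProofs

/-- `J^3_1(P,R)` coincides with the commutator submodule
`[I^3(P,R), I^3(P,R)]`. -/
theorem J3_one_eq_commutator_submodule
    {P R : Type*} [PartialOrder P] [Fintype P] [DecidableEq P] [LocallyFiniteOrder P]
    [CommRing R] :
    J3 P R 1 = Submodule.span R
      {h : Flag3 P → R | ∃ f g : Flag3 P → R, h = mul3 P R f g - mul3 P R g f} := by
  apply le_antisymm
  · -- J3 1 ≤ span of commutators
    intro f hf
    have hf' : ∀ t : Flag3 P, ell t.1.1 t.1.2.2 < ((1 : ℕ) : ℕ∞) → f t = 0 := hf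
    haveI : Fintype (Flag3 P) := Fintype.ofFinite _
    have hrep : f = ∑ t : Flag3 P, f t • e3 R t := by
      funext s
      simp [e3, Finset.sum_apply, Pi.smul_apply, smul_eq_mul, mul_ite, mul_one, mul_zero,
        Finset.sum_ite_eq]
    rw [hrep]
    apply Submodule.sum_mem
    intro t _
    obtain ⟨⟨x, y, z⟩, hxy, hyz⟩ := t
    by_cases hxz : x = z
    · have h0 : f ⟨(x, y, z), hxy, hyz⟩ = 0 := by
        apply hf'
        rw [Nat.cast_one]
        exact (ell_lt_one_iff x z (hxy.trans hyz)).mpr hxz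
      rw [h0, zero_smul]
      exact Submodule.zero_mem _
    · apply Submodule.smul_mem
      apply Submodule.subset_span
      refine ⟨e3 R ⟨(x, y, y), hxy, le_refl y⟩, e3 R ⟨(y, y, z), le_refl y, hyz⟩, ?_⟩
      rw [mul3_e3_comp x y z hxy hyz,
        mul3_e3_incomp (⟨(y, y, z), le_refl y, hyz⟩ : Flag3 P)
          (⟨(x, y, y), hxy, le_refl y⟩ : Flag3 P) ?_, sub_zero]
      intro hc
      simp only [Prod.mk.injEq] at hc
      exact hxz (hc.1.symm.trans hc.2.symm)
  · -- span ≤ J3 1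
    rw [Submodule.span_le]
    rintro h ⟨f, g, rfl⟩
    intro t ht
    obtain ⟨⟨x, y, z⟩, hxy, hyz⟩ := t
    rw [Nat.cast_one] at ht
    have hxz : x = z := (ell_lt_one_iff x z (hxy.trans hyz)).mp ht
    subst hxz
    have hyx : y = x := le_antisymm hyz hxy
    subst hyx
    show mul3 P R f g ⟨(y, y, y), hxy, hyz⟩ - mul3 P R g f ⟨(y, y, y), hxy, hyz⟩ = 0
    rw [mul3_diag, mul3_diag, mul_comm, sub_self]
end

section
/- Let P be a finite poset and R a commutative unital ring. Set Z^3_1(P,R) = J^3_1(P,R) and Z^3_{i+1}(P,R) = [Z^3_i(P,R), Z^3_i(P,R)]. Then Z^3_3(P,R) = J^3_2(P,R). In particular, Z^3_3(P,R) is an ideal of I^3(P,R). -/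
/-- `Z^3_2(P,R) = [J^3_1(P,R), J^3_1(P,R)]`. -/
def Z3two (P R : Type*) [PartialOrder P] [LocallyFiniteOrder P] [CommRing R] :
    Submodule R (Flag3 P → R) :=
  commSub P R (J3 P R 1) (J3 P R 1)

/-- `Z^3_3(P,R) = [Z^3_2(P,R), Z^3_2(P,R)]`. -/
def Z3three (P R : Type*) [PartialOrder P] [LocallyFiniteOrder P] [CommRing R] :
    Submodule R (Flag3 P → R) :=
  commSub P R (Z3two P R) (Z3two P R)

open Finset in
/-! ### Auxiliary machinery -/

namespace Z3Aux

section EllLemmas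

variable {P : Type*} [PartialOrder P]

lemma chainHeight_singleton' (x : P) : ({x} : Set P).chainHeight (· < ·) = 1 := by
  refine le_antisymm ?_ ((Set.one_le_chainHeight_iff _ _).mpr (Set.singleton_nonempty x))
  simpa using Set.chainHeight_le_encard ({x} : Set P) (· < ·)

lemma ell_self (x : P) : ell x x = 0 := by
  simp [ell, Set.Icc_self, chainHeight_singleton']

lemma one_le_ell {x z : P} (h : x < z) : 1 ≤ ell x z := by
  have h2 : (2 : ℕ∞) ≤ (Set.Icc x z).chainHeight (· < ·) := by
    have := Set.encard_le_chainHeight_of_isChain (r := (· < ·)) (Set.Icc x z) {x, z}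
      (by intro w hw; rcases hw with rfl | rfl <;> simp [h.le])
      (by intro a ha b hb hab; rcases ha with rfl | rfl <;> rcases hb with rfl | rfl <;> simp_all)
    rwa [Set.encard_pair h.ne] at this
  calc (1:ℕ∞) = 2 - 1 := by rfl
  _ ≤ _ := tsub_le_tsub_right h2 1

lemma two_le_ell {x w z : P} (h1 : x < w) (h2 : w < z) : 2 ≤ ell x z := by
  have h3 : (3 : ℕ∞) ≤ (Set.Icc x z).chainHeight (· < ·) := by
    have := Set.encard_le_chainHeight_of_isChain (r := (· < ·)) (Set.Icc x z) {x, w, z}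
      (by
        intro i hi
        rcases hi with rfl | rfl | rfl <;>
          simp_all [h1.le, h2.le, h1.le.trans h2.le])
      (by
        intro a ha b hb hab
        rcases ha with rfl | rfl | rfl <;> rcases hb with rfl | rfl | rfl <;>
          simp_all [h1.trans h2])
    rw [Set.encard_insert_of_notMem (by simp [h1.ne, (h1.trans h2).ne]),
      Set.encard_pair h2.ne] at this
    exact le_trans (by norm_num) this
  calc (2:ℕ∞) = 3 - 1 := by rfl
  _ ≤ _ := tsub_le_tsub_right h3 1

lemma eq_of_ell_lt_one {x z : P} (hxz : x ≤ z) (h : ell x z < 1) : x = z := by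
  by_contra hne
  exact absurd (one_le_ell (lt_of_le_of_ne hxz hne)) h.not_ge

lemma eq_or_eq_of_ell_lt_two {x w z : P} (h1 : x ≤ w) (h2 : w ≤ z) (h : ell x z < 2) :
    w = x ∨ w = z := by
  by_contra hne
  push_neg at hne
  exact absurd (two_le_ell (lt_of_le_of_ne h1 (Ne.symm hne.1)) (lt_of_le_of_ne h2 hne.2))
    h.not_ge

lemma exists_middle {x z : P} (h : 2 ≤ ell x z) : ∃ w, x < w ∧ w < z := by
  have h3 : (3 : ℕ∞) ≤ (Set.Icc x z).chainHeight (· < ·) := by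
    have hch := h
    unfold ell at hch
    rcases eq_or_ne ((Set.Icc x z).chainHeight (· < ·)) ⊤ with ht | ht
    · simp [ht]
    · lift (Set.Icc x z).chainHeight (· < ·) to ℕ using ht with n hn
      rw [show (1:ℕ∞) = ((1:ℕ):ℕ∞) from rfl, ← ENat.natCast_sub,
        show (2:ℕ∞) = ((2:ℕ):ℕ∞) from rfl, Nat.cast_le] at hch
      rw [show (3:ℕ∞) = ((3:ℕ):ℕ∞) from rfl, Nat.cast_le]
      omega
  obtain ⟨t, hts, hcard, _⟩ := Set.exists_isChain_of_le_chainHeight 3 h3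
  obtain ⟨a, b, c, hab, hac, hbc, rfl⟩ := Set.encard_eq_three.mp hcard
  have hex : ∃ w ∈ ({a, b, c} : Set P), w ≠ x ∧ w ≠ z := by
    by_contra hh
    push_neg at hh
    have ha := hh a (by simp)
    have hb := hh b (by simp)
    have hc := hh c (by simp)
    by_cases hax : a = x
    · have hb' := hb (fun e => hab (hax.trans e.symm))
      have hc' := hc (fun e => hac (hax.trans e.symm))
      exact hbc (hb'.trans hc'.symm)
    · have ha' := ha hax
      by_cases hbx : b = x
      · exact hac (ha'.trans (hc (fun e => hbc (hbx.trans e.symm))).symm)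
      · exact hab (ha'.trans (hb hbx).symm)
  obtain ⟨w, hw, hwx, hwz⟩ := hex
  have hwm := hts hw
  rw [Set.mem_Icc] at hwm
  exact ⟨w, lt_of_le_of_ne hwm.1 (Ne.symm hwx), lt_of_le_of_ne hwm.2 hwz⟩

lemma ell_le_ell_of_le {x v x' v' : P} (h1 : x' ≤ x) (h2 : v ≤ v') :
    ell x v ≤ ell x' v' :=
  tsub_le_tsub_right (Set.chainHeight_mono (r := (· < ·)) _ _ (Set.Icc_subset_Icc h1 h2)) 1

end EllLemmas

section Main

variable {P R : Type*} [PartialOrder P] [LocallyFiniteOrder P] [CommRing R] [DecidableEq P]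

instance : DecidableRel (α := P) (· ≤ ·) := fun a b =>
  decidable_of_iff (b ∈ Finset.Icc a b) (by simp)

lemma mem_J3_iff (k : ℕ) (f : Flag3 P → R) :
    f ∈ J3 P R k ↔ ∀ t : Flag3 P, ell t.1.1 t.1.2.2 < (k : ℕ∞) → f t = 0 :=
  Iff.rfl

/-- Extension of a flag function to all triples. -/
def fext (f : Flag3 P → R) : P × P × P → R := fun s =>
  if h : s.1 ≤ s.2.1 ∧ s.2.1 ≤ s.2.2 then f ⟨s, h⟩ else 0

lemma fext_apply (f : Flag3 P → R) (s : P × P × P) (h : s.1 ≤ s.2.1 ∧ s.2.1 ≤ s.2.2) :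
    fext f s = f ⟨s, h⟩ := dif_pos h

lemma mul3_apply (f g : Flag3 P → R) (t : Flag3 P) :
    mul3 P R f g t = ∑ u ∈ Finset.Icc t.1.1 t.1.2.1, ∑ v ∈ Finset.Icc t.1.2.1 t.1.2.2,
      fext f (t.1.1, u, v) * fext g (u, v, t.1.2.2) := by
  have h1 : mul3 P R f g t =
      ∑ x ∈ ((Finset.Icc t.1.1 t.1.2.1) ×ˢ (Finset.Icc t.1.2.1 t.1.2.2)),
        (fun x : P × P => fext f (t.1.1, x.1, x.2) * fext g (x.1, x.2, t.1.2.2)) x := by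
    rw [mul3, ← Finset.sum_attach (((Finset.Icc t.1.1 t.1.2.1) ×ˢ (Finset.Icc t.1.2.1 t.1.2.2)))
      (fun x : P × P => fext f (t.1.1, x.1, x.2) * fext g (x.1, x.2, t.1.2.2))]
    refine Finset.sum_congr rfl fun p _ => ?_
    obtain ⟨hm1, hm2⟩ := Finset.mem_product.mp p.2
    rw [Finset.mem_Icc] at hm1 hm2
    simp only [fext]
    rw [dif_pos ⟨hm1.1, hm1.2.trans hm2.1⟩, dif_pos ⟨hm1.2.trans hm2.1, hm2.2⟩]
  rw [h1, Finset.sum_product]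

/-- The span element `F(a,b,c,d) = ∑_{b ≤ u ≤ c} e_{(a,u,d)}`. -/
def Fel (a b c d : P) : Flag3 P → R := fun t =>
  if t.1.1 = a ∧ t.1.2.2 = d ∧ b ≤ t.1.2.1 ∧ t.1.2.1 ≤ c then 1 else 0

lemma fext_Fel (a b c d : P) (s : P × P × P) :
    fext (Fel a b c d : Flag3 P → R) s =
      if s.1 ≤ s.2.1 ∧ s.2.1 ≤ s.2.2 ∧ s.1 = a ∧ s.2.2 = d ∧ b ≤ s.2.1 ∧ s.2.1 ≤ c then 1
      else 0 := by
  rw [fext]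
  by_cases h : s.1 ≤ s.2.1 ∧ s.2.1 ≤ s.2.2
  · rw [dif_pos h]
    show (if s.1 = a ∧ s.2.2 = d ∧ b ≤ s.2.1 ∧ s.2.1 ≤ c then (1:R) else 0) = _
    by_cases h2 : s.1 = a ∧ s.2.2 = d ∧ b ≤ s.2.1 ∧ s.2.1 ≤ c
    · rw [if_pos h2, if_pos ⟨h.1, h.2, h2.1, h2.2.1, h2.2.2.1, h2.2.2.2⟩]
    · rw [if_neg h2, if_neg fun hh => h2 ⟨hh.2.2.1, hh.2.2.2.1, hh.2.2.2.2⟩]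
  · rw [dif_neg h, if_neg fun hh => h ⟨hh.1, hh.2.1⟩]

lemma e3_eq_Fel (a b c : P) (h1 : a ≤ b) (h2 : b ≤ c) :
    (e3 R ⟨(a, b, c), h1, h2⟩ : Flag3 P → R) = Fel a b b c := by
  funext t
  obtain ⟨⟨x, y, z⟩, hxy, hyz⟩ := t
  rw [e3, Fel]
  by_cases h : x = a ∧ y = b ∧ z = c
  · obtain ⟨rfl, rfl, rfl⟩ := h
    rw [if_pos rfl, if_pos ⟨rfl, rfl, le_refl _, le_refl _⟩]
  · rw [if_neg, if_neg]
    · rintro ⟨ha, hc, hb1, hb2⟩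
      exact h ⟨ha, le_antisymm hb2 hb1, hc⟩
    · intro he
      have := congrArg Subtype.val he
      rw [Prod.mk.injEq, Prod.mk.injEq] at this
      exact h ⟨this.1, this.2.1, this.2.2⟩

lemma e3_apply' (t0 t : Flag3 P) : (e3 R t0 : Flag3 P → R) t = if t.1 = t0.1 then 1 else 0 := by
  rw [e3]
  exact if_congr Subtype.ext_iff rfl rfl

set_option linter.unusedSectionVars false in
lemma sum_sum_ite (A B : Finset P) (p : P → P → Prop)
    [∀ u v, Decidable (p u v)] (u0 v0 : P)
    (huniq : ∀ u ∈ A, ∀ v ∈ B, p u v → u = u0 ∧ v = v0) :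
    (∑ u ∈ A, ∑ v ∈ B, if p u v then (1:R) else 0) =
      if u0 ∈ A ∧ v0 ∈ B ∧ p u0 v0 then 1 else 0 := by
  by_cases h : u0 ∈ A ∧ v0 ∈ B ∧ p u0 v0
  · rw [if_pos h, Finset.sum_eq_single u0]
    · rw [Finset.sum_eq_single v0]
      · rw [if_pos h.2.2]
      · intro v hv hne
        rw [if_neg fun hp => hne (huniq _ h.1 _ hv hp).2]
      · intro habs; exact absurd h.2.1 habs
    · intro u hu hne
      refine Finset.sum_eq_zero fun v hv => ?_
      rw [if_neg fun hp => hne (huniq _ hu _ hv hp).1]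
    · intro habs; exact absurd h.1 habs
  · rw [if_neg h]
    refine Finset.sum_eq_zero fun u hu => Finset.sum_eq_zero fun v hv => ?_
    refine if_neg fun hp => ?_
    obtain ⟨rfl, rfl⟩ := huniq _ hu _ hv hp
    exact h ⟨hu, hv, hp⟩

/-- Master product formula for the `Fel` elements. -/
lemma mul3_Fel (a b c d a' b' c' d' : P) (h1 : a ≤ b) (h2 : b ≤ c) (h3 : c ≤ d)
    (h1' : a' ≤ b') (h2' : b' ≤ c') (h3' : c' ≤ d') :
    mul3 P R (Fel a b c d) (Fel a' b' c' d') =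
      if b ≤ a' ∧ a' ≤ c ∧ b' ≤ d ∧ d ≤ c' then (Fel a a' d d' : Flag3 P → R) else 0 := by
  clear h2 h1' h2'
  funext t
  obtain ⟨⟨x, y, z⟩, hxy, hyz⟩ := t
  rw [mul3_apply]
  simp only
  have key : ∀ u v : P, fext (Fel a b c d : Flag3 P → R) (x, u, v) *
      fext (Fel a' b' c' d' : Flag3 P → R) (u, v, z) =
      if (x ≤ u ∧ u ≤ v ∧ x = a ∧ v = d ∧ b ≤ u ∧ u ≤ c) ∧
         (u ≤ v ∧ v ≤ z ∧ u = a' ∧ z = d' ∧ b' ≤ v ∧ v ≤ c') then 1 else 0 := by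
    intro u v
    rw [fext_Fel, fext_Fel, ite_zero_mul_ite_zero]
    simp only [mul_one]
  simp only [key]
  rw [sum_sum_ite _ _ _ a' d (fun u _ v _ hp => ⟨hp.2.2.2.1, hp.1.2.2.2.1⟩)]
  by_cases hC : b ≤ a' ∧ a' ≤ c ∧ b' ≤ d ∧ d ≤ c'
  · rw [if_pos hC]
    show _ = Fel a a' d d' (⟨(x, y, z), hxy, hyz⟩ : Flag3 P)
    rw [Fel]
    refine if_congr ?_ rfl rfl
    simp only [Finset.mem_Icc]
    constructor
    · rintro ⟨⟨_, hay⟩, ⟨hyd, _⟩, ⟨_, _, hxa, _, _, _⟩, ⟨_, _, _, hzd, _, _⟩⟩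
      exact ⟨hxa, hzd, hay, hyd⟩
    · rintro ⟨hxa, hzd, hay, hyd⟩
      have hxa' : x ≤ a' := hxa.le.trans (h1.trans hC.1)
      have had : a' ≤ d := hC.2.1.trans h3
      have hdz : d ≤ z := (hC.2.2.2.trans h3').trans hzd.ge
      refine ⟨⟨hxa', hay⟩, ⟨hyd, hdz⟩,
        ⟨hxa', had, hxa, ?_, hC.1, hC.2.1⟩,
        ⟨had, hdz, ?_, hzd, hC.2.2.1, hC.2.2.2⟩⟩ <;> trivial
  · rw [if_neg hC]
    show _ = (0 : Flag3 P → R) (⟨(x, y, z), hxy, hyz⟩ : Flag3 P)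
    rw [Pi.zero_apply, if_neg]
    rintro ⟨_, _, ⟨_, _, _, _, hba, hac⟩, ⟨_, _, _, _, hbd, hdc⟩⟩
    exact hC ⟨hba, hac, hbd, hdc⟩

end Main

end Z3Aux

namespace Z3Aux

section Main2

variable {P R : Type*} [PartialOrder P] [LocallyFiniteOrder P] [CommRing R] [DecidableEq P]

lemma J1_apply_diag {f : Flag3 P → R} (hf : f ∈ J3 P R 1) (x : P) :
    f ⟨(x, x, x), le_refl x, le_refl x⟩ = 0 := by
  refine (mem_J3_iff 1 f).mp hf _ ?_
  show ell x x < _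
  rw [ell_self, Nat.cast_one]
  exact zero_lt_one

lemma Fel_single_mem_J1 (a b c : P) (h1 : a ≤ b) (h2 : b ≤ c) (h : a < c) :
    (Fel a b b c : Flag3 P → R) ∈ J3 P R 1 := by
  rw [← e3_eq_Fel a b c h1 h2, mem_J3_iff]
  intro t ht
  rw [e3]
  refine if_neg fun he => ?_
  rw [he] at ht
  rw [Nat.cast_one] at ht
  exact absurd (one_le_ell h) (not_le.mpr ht)

lemma comm_mem {U V : Submodule R (Flag3 P → R)} {f g : Flag3 P → R}
    (hf : f ∈ U) (hg : g ∈ V) :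
    mul3 P R f g - mul3 P R g f ∈ commSub P R U V :=
  Submodule.subset_span ⟨f, hf, g, hg, rfl⟩

lemma Fel_comm_mem {U V : Submodule R (Flag3 P → R)} {a b c d a' b' c' d' : P}
    (h1 : a ≤ b) (h2 : b ≤ c) (h3 : c ≤ d) (h1' : a' ≤ b') (h2' : b' ≤ c') (h3' : c' ≤ d')
    (hf : (Fel a b c d : Flag3 P → R) ∈ U) (hg : (Fel a' b' c' d' : Flag3 P → R) ∈ V)
    (hC : b ≤ a' ∧ a' ≤ c ∧ b' ≤ d ∧ d ≤ c')
    (hC' : ¬(b' ≤ a ∧ a ≤ c' ∧ b ≤ d' ∧ d' ≤ c)) :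
    (Fel a a' d d' : Flag3 P → R) ∈ commSub P R U V := by
  have h := comm_mem hf hg
  rwa [mul3_Fel a b c d a' b' c' d' h1 h2 h3 h1' h2' h3', if_pos hC,
    mul3_Fel a' b' c' d' a b c d h1' h2' h3' h1 h2 h3, if_neg hC', sub_zero] at h

/-- `F(x,x,y,y) = ∑_{x ≤ u ≤ y} e_{(x,u,y)} ∈ Z²`. -/
lemma Fel_xxyy_mem (x y : P) (h : x < y) : (Fel x x y y : Flag3 P → R) ∈ Z3two P R := by
  rw [Z3two]
  exact Fel_comm_mem (le_refl x) (le_refl x) h.le h.le (le_refl y) (le_refl y)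
    (Fel_single_mem_J1 x x y (le_refl x) h.le h)
    (Fel_single_mem_J1 x y y h.le (le_refl y) h)
    ⟨le_refl x, le_refl x, le_refl y, le_refl y⟩
    fun hc => absurd hc.1 h.not_ge

/-- `e_{(x,w,z)} ∈ Z²` whenever `x < w < z`. -/
lemma Fel_mid_mem (x w z : P) (hxw : x < w) (hwz : w < z) :
    (Fel x w w z : Flag3 P → R) ∈ Z3two P R := by
  rw [Z3two]
  exact Fel_comm_mem hxw.le (le_refl w) (le_refl w) (le_refl w) (le_refl w) hwz.le
    (Fel_single_mem_J1 x w w hxw.le (le_refl w) hxw)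
    (Fel_single_mem_J1 w w z (le_refl w) hwz.le hwz)
    ⟨le_refl w, le_refl w, le_refl w, le_refl w⟩
    fun hc => absurd hc.1 hxw.not_ge

/-- Case 1 : `e_{(x,y,z)} ∈ Z³` whenever `x < y < z`. -/
lemma e3_mem_between (x y z : P) (hxy : x < y) (hyz : y < z) :
    (e3 R ⟨(x, y, z), hxy.le, hyz.le⟩ : Flag3 P → R) ∈ Z3three P R := by
  rw [e3_eq_Fel x y z hxy.le hyz.le, Z3three]
  exact Fel_comm_mem (le_refl x) hxy.le (le_refl y) (le_refl y) hyz.le (le_refl z)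
    (Fel_xxyy_mem x y hxy) (Fel_xxyy_mem y z hyz)
    ⟨hxy.le, le_refl y, le_refl y, hyz.le⟩
    fun hc => absurd hc.1 hxy.not_ge

/-- Splitting of `Fel` into a basis element and the rest. -/
lemma Fel_split (a b c d i : P) (h1 : a ≤ b) (h3 : c ≤ d) (hbi : b ≤ i) (hic : i ≤ c) :
    (Fel a b c d : Flag3 P → R) = e3 R ⟨(a, i, d), h1.trans hbi, hic.trans h3⟩ +
      ∑ u ∈ ((Finset.Icc b c).erase i).attach,
        (e3 R ⟨(a, u.1, d),
          h1.trans (Finset.mem_Icc.mp (Finset.mem_of_mem_erase u.2)).1,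
          (Finset.mem_Icc.mp (Finset.mem_of_mem_erase u.2)).2.trans h3⟩ : Flag3 P → R) := by
  funext t
  obtain ⟨⟨x, y, z⟩, hxy, hyz⟩ := t
  rw [Pi.add_apply, Finset.sum_apply, Fel]
  simp only [e3_apply', Prod.mk.injEq]
  by_cases hc : x = a ∧ z = d ∧ b ≤ y ∧ y ≤ c
  · rw [if_pos hc]
    obtain ⟨rfl, rfl, hby, hyc⟩ := hc
    by_cases hyi : y = i
    · subst hyi
      rw [if_pos ⟨rfl, rfl, rfl⟩, Finset.sum_eq_zero, add_zero]
      intro u _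
      refine if_neg fun hh => ?_
      exact (Finset.ne_of_mem_erase u.2) hh.2.1.symm
    · rw [if_neg fun hh => hyi hh.2.1,
        Finset.sum_eq_single
          (⟨y, Finset.mem_erase.mpr ⟨hyi, Finset.mem_Icc.mpr ⟨hby, hyc⟩⟩⟩ :
            {u // u ∈ (Finset.Icc b c).erase i}),
        if_pos ⟨rfl, rfl, rfl⟩, zero_add]
      · intro u _ hne
        refine if_neg fun hh => hne ?_
        exact Subtype.ext hh.2.1.symm
      · intro habs; exact absurd (Finset.mem_attach _ _) habs
  · rw [if_neg hc, if_neg, Finset.sum_eq_zero, add_zero]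
    · intro u _
      refine if_neg fun hh => ?_
      have hm := Finset.mem_Icc.mp (Finset.mem_of_mem_erase u.2)
      refine hc ⟨hh.1, hh.2.2, ?_, ?_⟩
      · exact hm.1.trans_eq hh.2.1.symm
      · exact hh.2.1.trans_le hm.2
    · refine fun hh => hc ⟨hh.1, hh.2.2, hbi.trans_eq hh.2.1.symm, hh.2.1.trans_le hic⟩

/-- Case 2 : `e_{(x,x,z)} ∈ Z³` when there is a middle element. -/
lemma e3_left_mem (x w z : P) (hxw : x < w) (hwz : w < z) :
    (e3 R ⟨(x, x, z), le_refl x, (hxw.trans hwz).le⟩ : Flag3 P → R) ∈ Z3three P R := by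
  have hAB : (Fel x x w z : Flag3 P → R) ∈ Z3three P R := by
    rw [Z3three]
    exact Fel_comm_mem (le_refl x) hxw.le (le_refl w) hxw.le (le_refl w) hwz.le
      (Fel_xxyy_mem x w hxw) (Fel_mid_mem x w z hxw hwz)
      ⟨le_refl x, hxw.le, le_refl w, le_refl w⟩
      fun hc => absurd hc.1 hxw.not_ge
  have hsplit := Fel_split (R := R) x x w z x (le_refl x) hwz.le (le_refl x) hxw.le
  have heq : (e3 R ⟨(x, x, z), le_refl x, (hxw.trans hwz).le⟩ : Flag3 P → R) =
      Fel x x w z - ∑ u ∈ ((Finset.Icc x w).erase x).attach,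
        (e3 R ⟨(x, u.1, z),
          (le_refl x).trans (Finset.mem_Icc.mp (Finset.mem_of_mem_erase u.2)).1,
          (Finset.mem_Icc.mp (Finset.mem_of_mem_erase u.2)).2.trans hwz.le⟩ : Flag3 P → R) :=
    eq_sub_of_add_eq hsplit.symm
  rw [heq]
  refine sub_mem hAB (Submodule.sum_mem _ fun u _ => ?_)
  have hm := Finset.mem_Icc.mp (Finset.mem_of_mem_erase u.2)
  have hxu : x < u.1 := lt_of_le_of_ne hm.1 (Ne.symm (Finset.ne_of_mem_erase u.2))
  have huz : u.1 < z := lt_of_le_of_lt hm.2 hwz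
  exact e3_mem_between x u.1 z hxu huz

/-- Case 3 : `e_{(x,z,z)} ∈ Z³` when there is a middle element. -/
lemma e3_right_mem (x w z : P) (hxw : x < w) (hwz : w < z) :
    (e3 R ⟨(x, z, z), (hxw.trans hwz).le, le_refl z⟩ : Flag3 P → R) ∈ Z3three P R := by
  have hAB : (Fel x w z z : Flag3 P → R) ∈ Z3three P R := by
    rw [Z3three]
    exact Fel_comm_mem hxw.le (le_refl w) hwz.le (le_refl w) hwz.le (le_refl z)
      (Fel_mid_mem x w z hxw hwz) (Fel_xxyy_mem w z hwz)
      ⟨le_refl w, le_refl w, hwz.le, le_refl z⟩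
      fun hc => absurd hc.1 hxw.not_ge
  have hsplit := Fel_split (R := R) x w z z z hxw.le (le_refl z) hwz.le (le_refl z)
  have heq : (e3 R ⟨(x, z, z), (hxw.trans hwz).le, le_refl z⟩ : Flag3 P → R) =
      Fel x w z z - ∑ u ∈ ((Finset.Icc w z).erase z).attach,
        (e3 R ⟨(x, u.1, z),
          hxw.le.trans (Finset.mem_Icc.mp (Finset.mem_of_mem_erase u.2)).1,
          (Finset.mem_Icc.mp (Finset.mem_of_mem_erase u.2)).2.trans (le_refl z)⟩ :
            Flag3 P → R) :=
    eq_sub_of_add_eq hsplit.symm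
  rw [heq]
  refine sub_mem hAB (Submodule.sum_mem _ fun u _ => ?_)
  have hm := Finset.mem_Icc.mp (Finset.mem_of_mem_erase u.2)
  have hxu : x < u.1 := lt_of_lt_of_le hxw hm.1
  have huz : u.1 < z := lt_of_le_of_ne hm.2 (Finset.ne_of_mem_erase u.2)
  exact e3_mem_between x u.1 z hxu huz

/-- Every basis element with `ℓ(x,z) ≥ 2` lies in `Z³`. -/
lemma e3_mem_Z3three (t : Flag3 P) (h2 : 2 ≤ ell t.1.1 t.1.2.2) :
    (e3 R t : Flag3 P → R) ∈ Z3three P R := by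
  obtain ⟨⟨x, y, z⟩, hxy, hyz⟩ := t
  obtain ⟨w, hxw, hwz⟩ := exists_middle h2
  by_cases hx : x = y
  · subst hx
    exact e3_left_mem x w z hxw hwz
  · by_cases hz : y = z
    · subst hz
      exact e3_right_mem x w y hxw hwz
    · exact e3_mem_between x y z (lt_of_le_of_ne hxy hx) (lt_of_le_of_ne hyz hz)

end Main2

end Z3Aux

namespace Z3Aux

section Main3

variable {P R : Type*} [PartialOrder P] [LocallyFiniteOrder P] [CommRing R] [DecidableEq P]

lemma Icc_pair {x z : P} (hxz : x ≤ z) (h2 : ell x z < 2) :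
    Finset.Icc x z = {x, z} := by
  ext w
  simp only [Finset.mem_Icc, Finset.mem_insert, Finset.mem_singleton]
  constructor
  · rintro ⟨hw1, hw2⟩
    exact eq_or_eq_of_ell_lt_two hw1 hw2 h2
  · rintro (rfl | rfl)
    · exact ⟨le_refl _, hxz⟩
    · exact ⟨hxz, le_refl _⟩

lemma mul3_apply_diag (f g : Flag3 P → R) (x : P) :
    mul3 P R f g ⟨(x, x, x), le_refl x, le_refl x⟩ =
      f ⟨(x, x, x), le_refl x, le_refl x⟩ * g ⟨(x, x, x), le_refl x, le_refl x⟩ := by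
  rw [mul3_apply]
  simp only
  rw [Finset.Icc_self, Finset.sum_singleton, Finset.sum_singleton,
    fext_apply f _ ⟨le_refl x, le_refl x⟩, fext_apply g _ ⟨le_refl x, le_refl x⟩]

lemma mul3_apply_cover_left (f g : Flag3 P → R) (x z : P) (hxz : x ≤ z) (hne : x ≠ z)
    (hIcc : Finset.Icc x z = {x, z}) :
    mul3 P R f g ⟨(x, x, z), le_refl x, hxz⟩ =
      f ⟨(x, x, x), le_refl x, le_refl x⟩ * g ⟨(x, x, z), le_refl x, hxz⟩ +
      f ⟨(x, x, z), le_refl x, hxz⟩ * g ⟨(x, z, z), hxz, le_refl z⟩ := by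
  rw [mul3_apply]
  simp only
  rw [Finset.Icc_self, Finset.sum_singleton, hIcc,
    Finset.sum_insert (by simp [hne]), Finset.sum_singleton,
    fext_apply f _ ⟨le_refl x, le_refl x⟩, fext_apply g _ ⟨le_refl x, hxz⟩,
    fext_apply f _ ⟨le_refl x, hxz⟩, fext_apply g _ ⟨hxz, le_refl z⟩]

lemma mul3_apply_cover_right (f g : Flag3 P → R) (x z : P) (hxz : x ≤ z) (hne : x ≠ z)
    (hIcc : Finset.Icc x z = {x, z}) :
    mul3 P R f g ⟨(x, z, z), hxz, le_refl z⟩ =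
      f ⟨(x, x, z), le_refl x, hxz⟩ * g ⟨(x, z, z), hxz, le_refl z⟩ +
      f ⟨(x, z, z), hxz, le_refl z⟩ * g ⟨(z, z, z), le_refl z, le_refl z⟩ := by
  rw [mul3_apply]
  simp only
  rw [Finset.Icc_self, hIcc, Finset.sum_insert (by simp [hne]),
    Finset.sum_singleton, Finset.sum_singleton, Finset.sum_singleton,
    fext_apply f _ ⟨le_refl x, hxz⟩, fext_apply g _ ⟨hxz, le_refl z⟩,
    fext_apply f _ ⟨hxz, le_refl z⟩, fext_apply g _ ⟨le_refl z, le_refl z⟩]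

lemma comm_apply_diag {f g : Flag3 P → R} (hf : f ∈ J3 P R 1) (t : Flag3 P)
    (hd : t.1.1 = t.1.2.2) :
    (mul3 P R f g - mul3 P R g f) t = 0 := by
  obtain ⟨⟨x, y, z⟩, hxy, hyz⟩ := t
  dsimp only at hxy hyz hd
  have hyx : y = x := le_antisymm (hyz.trans_eq hd.symm) hxy
  have hflag : (⟨(x, y, z), hxy, hyz⟩ : Flag3 P) = ⟨(x, x, x), le_refl x, le_refl x⟩ :=
    Subtype.ext (show (x, y, z) = (x, x, x) by rw [hyx, ← hd])
  rw [Pi.sub_apply, hflag, mul3_apply_diag, mul3_apply_diag, J1_apply_diag hf,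
    zero_mul, mul_zero, sub_zero]

/-- Every element of `Z²` lies in `J¹` and takes equal values on `(x,x,z)` and `(x,z,z)`
whenever `ℓ(x,z) < 2`. -/
lemma Z3two_prop {h : Flag3 P → R} (hh : h ∈ Z3two P R) :
    h ∈ J3 P R 1 ∧ ∀ (x z : P) (hxz : x ≤ z), ell x z < 2 →
      h ⟨(x, x, z), le_refl x, hxz⟩ = h ⟨(x, z, z), hxz, le_refl z⟩ := by
  refine Submodule.span_induction ?_ ?_ ?_ ?_ hh
  · rintro k ⟨f, hf, g, hg, rfl⟩
    constructor
    · rw [mem_J3_iff]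
      intro t ht
      rw [Nat.cast_one] at ht
      exact comm_apply_diag hf t (eq_of_ell_lt_one (t.2.1.trans t.2.2) ht)
    · intro x z hxz h2
      by_cases hne : x = z
      · subst hne
        rfl
      · have hIcc := Icc_pair hxz h2
        rw [Pi.sub_apply, Pi.sub_apply,
          mul3_apply_cover_left f g x z hxz hne hIcc,
          mul3_apply_cover_right f g x z hxz hne hIcc,
          mul3_apply_cover_left g f x z hxz hne hIcc,
          mul3_apply_cover_right g f x z hxz hne hIcc,
          J1_apply_diag hf, J1_apply_diag hg, J1_apply_diag hf, J1_apply_diag hg]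
        ring
  · exact ⟨zero_mem _, fun x z hxz h2 => rfl⟩
  · rintro f g _ _ ⟨hf1, hf2⟩ ⟨hg1, hg2⟩
    exact ⟨add_mem hf1 hg1, fun x z hxz h2 => by
      rw [Pi.add_apply, Pi.add_apply, hf2 x z hxz h2, hg2 x z hxz h2]⟩
  · rintro r f _ ⟨hf1, hf2⟩
    exact ⟨Submodule.smul_mem _ _ hf1, fun x z hxz h2 => by
      rw [Pi.smul_apply, Pi.smul_apply, hf2 x z hxz h2]⟩

lemma Z3three_le_J3two : Z3three P R ≤ J3 P R 2 := by
  rw [Z3three, commSub]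
  refine Submodule.span_le.mpr ?_
  rintro k ⟨f, hf, g, hg, rfl⟩
  obtain ⟨hfJ, hfP⟩ := Z3two_prop hf
  obtain ⟨hgJ, hgP⟩ := Z3two_prop hg
  intro t ht
  show (mul3 P R f g - mul3 P R g f) t = 0
  obtain ⟨⟨x, y, z⟩, hxy, hyz⟩ := t
  dsimp only at hxy hyz ht
  rw [Nat.cast_ofNat] at ht
  have hxz : x ≤ z := hxy.trans hyz
  by_cases hne : x = z
  · exact comm_apply_diag hfJ ⟨(x, y, z), hxy, hyz⟩ hne
  · have hIcc := Icc_pair hxz ht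
    rcases eq_or_eq_of_ell_lt_two hxy hyz ht with hy | hy
    · have hflag : (⟨(x, y, z), hxy, hyz⟩ : Flag3 P) = ⟨(x, x, z), le_refl x, hxz⟩ :=
        Subtype.ext (show (x, y, z) = (x, x, z) by rw [hy])
      rw [Pi.sub_apply, hflag,
        mul3_apply_cover_left f g x z hxz hne hIcc,
        mul3_apply_cover_left g f x z hxz hne hIcc,
        J1_apply_diag hfJ, J1_apply_diag hgJ,
        hfP x z hxz ht, hgP x z hxz ht]
      ring
    · have hflag : (⟨(x, y, z), hxy, hyz⟩ : Flag3 P) = ⟨(x, z, z), hxz, le_refl z⟩ :=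
        Subtype.ext (show (x, y, z) = (x, z, z) by rw [hy])
      rw [Pi.sub_apply, hflag,
        mul3_apply_cover_right f g x z hxz hne hIcc,
        mul3_apply_cover_right g f x z hxz hne hIcc,
        J1_apply_diag hfJ, J1_apply_diag hgJ,
        hfP x z hxz ht, hgP x z hxz ht]
      ring

lemma J3_mul_right {k : ℕ} {f : Flag3 P → R} (hf : f ∈ J3 P R k) (g : Flag3 P → R) :
    mul3 P R f g ∈ J3 P R k := by
  rw [mem_J3_iff]
  intro t ht
  obtain ⟨⟨x, y, z⟩, hxy, hyz⟩ := t
  rw [mul3_apply]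
  refine Finset.sum_eq_zero fun u hu => Finset.sum_eq_zero fun v hv => ?_
  simp only at ht hu hv ⊢
  rw [Finset.mem_Icc] at hu hv
  refine mul_eq_zero_of_left ?_ _
  rw [fext]
  split
  case isTrue hchain =>
    exact (mem_J3_iff k f).mp hf ⟨(x, u, v), hchain⟩
      (lt_of_le_of_lt (ell_le_ell_of_le (le_refl x) hv.2) ht)
  case isFalse => rfl

lemma J3_mul_left {k : ℕ} {f : Flag3 P → R} (hf : f ∈ J3 P R k) (g : Flag3 P → R) :
    mul3 P R g f ∈ J3 P R k := by
  rw [mem_J3_iff]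
  intro t ht
  obtain ⟨⟨x, y, z⟩, hxy, hyz⟩ := t
  rw [mul3_apply]
  refine Finset.sum_eq_zero fun u hu => Finset.sum_eq_zero fun v hv => ?_
  simp only at ht hu hv ⊢
  rw [Finset.mem_Icc] at hu hv
  refine mul_eq_zero_of_right _ ?_
  rw [fext]
  split
  case isTrue hchain =>
    exact (mem_J3_iff k f).mp hf ⟨(u, v, z), hchain⟩
      (lt_of_le_of_lt (ell_le_ell_of_le hu.1 (le_refl z)) ht)
  case isFalse => rfl

lemma eq_sum_e3 [Fintype (Flag3 P)] (f : Flag3 P → R) :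
    f = ∑ t : Flag3 P, f t • (e3 R t : Flag3 P → R) := by
  funext s
  rw [Finset.sum_apply, Finset.sum_eq_single s]
  · rw [Pi.smul_apply, e3, if_pos rfl, smul_eq_mul, mul_one]
  · intro t _ hne
    rw [Pi.smul_apply, e3, if_neg fun h => hne h.symm, smul_zero]
  · intro h; exact absurd (Finset.mem_univ s) h

end Main3

end Z3Aux

/-- `Z^3_3(P,R) = J^3_2(P,R)`; in particular `Z^3_3(P,R)` is an ideal
of `I^3(P,R)`. -/
theorem Z3_three_eq_J3_two
    {P R : Type*} [PartialOrder P] [Fintype P] [DecidableEq P] [LocallyFiniteOrder P]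
    [CommRing R] :
    Z3three P R = J3 P R 2 ∧
    (∀ f g : Flag3 P → R, f ∈ Z3three P R →
      mul3 P R f g ∈ Z3three P R ∧ mul3 P R g f ∈ Z3three P R) := by
  haveI : Fintype (Flag3 P) := Fintype.ofFinite _
  have hpart1 : Z3three P R = J3 P R 2 := by
    refine le_antisymm Z3Aux.Z3three_le_J3two ?_
    intro f hf
    rw [Z3Aux.eq_sum_e3 f]
    refine Submodule.sum_mem _ fun t _ => ?_
    by_cases h0 : f t = 0
    · rw [h0, zero_smul]
      exact zero_mem _
    · refine Submodule.smul_mem _ _ (Z3Aux.e3_mem_Z3three t ?_)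
      by_contra hlt
      rw [not_le] at hlt
      exact h0 ((Z3Aux.mem_J3_iff 2 f).mp hf t (by
        rwa [Nat.cast_ofNat]))
  refine ⟨hpart1, fun f g hf => ?_⟩
  rw [hpart1] at hf ⊢
  exact ⟨Z3Aux.J3_mul_right hf g, Z3Aux.J3_mul_left hf g⟩
end
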